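/- Let ω₀ : ℝ³ → ℝ³ be a smooth compactly supported vector field and define v₀(x) = −∫_{ℝ³} (4π‖x−y‖³)⁻¹ • ((x−y) × ω₀(y)) dy. Then v₀ is continuous on ℝ³, there exist constants C > 0 and R > 0 such that ‖v₀(x)‖ ≤ C / ‖x‖² whenever ‖x‖ ≥ R, and consequently v₀ ∈ L^p(ℝ³; ℝ³) (MemLp v₀ p) for every p with 3/2 < p ≤ ∞. -/

import Mathlib

open MeasureTheory Metric Set Filter Module
open scoped RealInnerProductSpace ContDiff SchwartzMap ENNReal Convolution

noncomputable section

abbrev E3 := EuclideanSpace ℝ (Fin 3)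
/-- The cross product of vectors in ℝ³. -/
def cross3 (a b : E3) : E3 :=
  WithLp.toLp 2 ![a 1 * b 2 - a 2 * b 1, a 2 * b 0 - a 0 * b 2, a 0 * b 1 - a 1 * b 0]

/-- The divergence of a vector field on ℝ³, with partial derivatives taken along the
standard basis vectors via `fderiv`. -/
def div3 (v : E3 → E3) (x : E3) : ℝ :=
  ∑ i, fderiv ℝ v x (EuclideanSpace.single i 1) i

/-- The curl of a vector field on ℝ³, with partial derivatives taken along the
standard basis vectors via `fderiv`. -/
def curl3 (Φ : E3 → E3) (x : E3) : E3 :=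
  WithLp.toLp 2 ![fderiv ℝ Φ x (EuclideanSpace.single 1 1) 2 - fderiv ℝ Φ x (EuclideanSpace.single 2 1) 1,
    fderiv ℝ Φ x (EuclideanSpace.single 2 1) 0 - fderiv ℝ Φ x (EuclideanSpace.single 0 1) 2,
    fderiv ℝ Φ x (EuclideanSpace.single 0 1) 1 - fderiv ℝ Φ x (EuclideanSpace.single 1 1) 0]


lemma norm_cross3_le (a b : E3) : ‖cross3 a b‖ ≤ ‖a‖ * ‖b‖ := by
  have ha : ‖a‖ = Real.sqrt (a 0 ^ 2 + a 1 ^ 2 + a 2 ^ 2) := by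
    rw [EuclideanSpace.norm_eq, Fin.sum_univ_three]; norm_num [sq_abs]
  have hb : ‖b‖ = Real.sqrt (b 0 ^ 2 + b 1 ^ 2 + b 2 ^ 2) := by
    rw [EuclideanSpace.norm_eq, Fin.sum_univ_three]; norm_num [sq_abs]
  have hc : ‖cross3 a b‖ = Real.sqrt ((a 1 * b 2 - a 2 * b 1) ^ 2
      + (a 2 * b 0 - a 0 * b 2) ^ 2 + (a 0 * b 1 - a 1 * b 0) ^ 2) := by
    rw [EuclideanSpace.norm_eq, Fin.sum_univ_three]; norm_num [cross3, sq_abs]; rfl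
  rw [ha, hb, hc, ← Real.sqrt_mul (by positivity)]
  apply Real.sqrt_le_sqrt
  nlinarith [sq_nonneg (a 0 * b 0 + a 1 * b 1 + a 2 * b 2)]

lemma cross3_add_left (a a' b : E3) : cross3 (a + a') b = cross3 a b + cross3 a' b := by
  ext i; fin_cases i <;> simp [cross3] <;> ring
lemma cross3_smul_left (c : ℝ) (a b : E3) : cross3 (c • a) b = c • cross3 a b := by
  ext i; fin_cases i <;> simp [cross3] <;> ring
lemma cross3_add_right (a b b' : E3) : cross3 a (b + b') = cross3 a b + cross3 a b' := by
  ext i; fin_cases i <;> simp [cross3] <;> ring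
lemma cross3_smul_right (c : ℝ) (a b : E3) : cross3 a (c • b) = c • cross3 a b := by
  ext i; fin_cases i <;> simp [cross3] <;> ring

def crossL : E3 →L[ℝ] E3 →L[ℝ] E3 :=
  LinearMap.mkContinuous₂
    (LinearMap.mk₂ ℝ cross3 cross3_add_left cross3_smul_left cross3_add_right cross3_smul_right)
    1 (fun a b => by simpa using norm_cross3_le a b)

@[simp] lemma crossL_apply (a b : E3) : crossL a b = cross3 a b := rfl

lemma finite_lint (M : ℝ) :
    ∫⁻ x in closedBall (0 : E3) M, ENNReal.ofReal ((‖x‖ ^ 2)⁻¹) < ⊤ := by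
  set μ := (volume : Measure E3).restrict (closedBall 0 M)
  have h_meas : Measurable fun x : E3 => (‖x‖ ^ 2)⁻¹ :=
    (measurable_norm.pow_const 2).inv
  have h_nn : ∀ x : E3, 0 ≤ (‖x‖ ^ 2)⁻¹ := fun x => by positivity
  have hlc := lintegral_eq_lintegral_meas_le μ (Eventually.of_forall h_nn) h_meas.aemeasurable
  rw [show ∫⁻ x in closedBall (0 : E3) M, ENNReal.ofReal ((‖x‖ ^ 2)⁻¹)
      = ∫⁻ x, ENNReal.ofReal ((‖x‖ ^ 2)⁻¹) ∂μ from rfl, hlc]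
  have hsub : ∀ t : ℝ, 0 < t → {a : E3 | t ≤ (‖a‖ ^ 2)⁻¹} ⊆ closedBall 0 (Real.sqrt t⁻¹) := by
    intro t ht a ha
    simp only [mem_setOf_eq] at ha
    rcases eq_or_ne a 0 with rfl | h0
    · simp [Real.sqrt_nonneg]
    · have hna : 0 < ‖a‖ := norm_pos_iff.mpr h0
      have h2 : ‖a‖ ^ 2 ≤ t⁻¹ := (le_inv_comm₀ ht (by positivity)).1 ha
      rw [mem_closedBall_zero_iff]
      calc ‖a‖ = Real.sqrt (‖a‖ ^ 2) := by rw [Real.sqrt_sq hna.le]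
      _ ≤ Real.sqrt t⁻¹ := Real.sqrt_le_sqrt h2
  calc ∫⁻ t in Ioi (0:ℝ), μ {a : E3 | t ≤ (‖a‖ ^ 2)⁻¹}
      ≤ ∫⁻ t in Ioc (0:ℝ) 1 ∪ Ioi 1, μ {a : E3 | t ≤ (‖a‖ ^ 2)⁻¹} :=
        lintegral_mono_set Ioi_subset_Ioc_union_Ioi
    _ ≤ (∫⁻ t in Ioc (0:ℝ) 1, μ {a : E3 | t ≤ (‖a‖ ^ 2)⁻¹})
        + ∫⁻ t in Ioi (1:ℝ), μ {a : E3 | t ≤ (‖a‖ ^ 2)⁻¹} := lintegral_union_le _ _ _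
    _ < ⊤ := by
        refine ENNReal.add_lt_top.2 ⟨?_, ?_⟩
        · calc (∫⁻ t in Ioc (0:ℝ) 1, μ {a : E3 | t ≤ (‖a‖ ^ 2)⁻¹})
              ≤ ∫⁻ _ in Ioc (0:ℝ) 1, volume (closedBall (0:E3) M) := by
                refine lintegral_mono fun t => ?_
                exact (measure_mono (subset_univ _)).trans_eq (Measure.restrict_apply_univ _)
          _ = volume (closedBall (0:E3) M) * volume (Ioc (0:ℝ) 1) := setLIntegral_const _ _
          _ < ⊤ := by
              refine ENNReal.mul_lt_top measure_closedBall_lt_top ?_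
              simp [Real.volume_Ioc]
        · have hb : ∀ t ∈ Ioi (1:ℝ), μ {a : E3 | t ≤ (‖a‖ ^ 2)⁻¹}
              ≤ ENNReal.ofReal (t ^ (-(3:ℝ)/2)) * volume (ball (0:E3) 1) := by
            intro t ht
            have ht0 : (0:ℝ) < t := lt_trans one_pos ht
            calc μ {a : E3 | t ≤ (‖a‖ ^ 2)⁻¹}
                ≤ volume (closedBall (0:E3) (Real.sqrt t⁻¹)) :=
                  le_trans (Measure.restrict_le_self _) (measure_mono (hsub t ht0))
              _ = ENNReal.ofReal (Real.sqrt t⁻¹ ^ finrank ℝ E3) * volume (ball (0:E3) 1) :=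
                  Measure.addHaar_closedBall _ _ (Real.sqrt_nonneg _)
              _ = ENNReal.ofReal (t ^ (-(3:ℝ)/2)) * volume (ball (0:E3) 1) := by
                  congr 2
                  rw [show finrank ℝ E3 = 3 from by simp [finrank_euclideanSpace],
                    Real.sqrt_eq_rpow, ← Real.rpow_natCast _ 3, ← Real.rpow_mul (by positivity)]
                  rw [show ((1:ℝ)/2 * (3:ℕ)) = (3:ℝ)/2 by norm_num]
                  rw [Real.inv_rpow ht0.le, ← Real.rpow_neg ht0.le]
                  norm_num
          calc (∫⁻ t in Ioi (1:ℝ), μ {a : E3 | t ≤ (‖a‖ ^ 2)⁻¹})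
              ≤ ∫⁻ t in Ioi (1:ℝ), ENNReal.ofReal (t ^ (-(3:ℝ)/2)) * volume (ball (0:E3) 1) :=
                setLIntegral_mono' measurableSet_Ioi hb
            _ = (∫⁻ t in Ioi (1:ℝ), ENNReal.ofReal (t ^ (-(3:ℝ)/2))) * volume (ball (0:E3) 1) :=
                lintegral_mul_const' _ _ measure_ball_lt_top.ne
            _ < ⊤ := ENNReal.mul_lt_top
                ((integrableOn_Ioi_rpow_of_lt (by norm_num) one_pos).setLIntegral_lt_top)
                measure_ball_lt_top

def kern (t : E3) : E3 := (4 * Real.pi * ‖t‖ ^ 3)⁻¹ • t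

lemma norm_kern (t : E3) : ‖kern t‖ = (4 * Real.pi)⁻¹ * (‖t‖ ^ 2)⁻¹ := by
  rcases eq_or_ne t 0 with rfl | h
  · simp [kern]
  · have h0 : 0 < ‖t‖ := norm_pos_iff.2 h
    have hπ : (0:ℝ) < Real.pi := Real.pi_pos
    rw [kern, norm_smul, Real.norm_eq_abs, abs_of_nonneg (by positivity)]
    field_simp

lemma measurable_kern : Measurable kern :=
  ((measurable_const.mul (measurable_norm.pow_const 3)).inv).smul measurable_id

lemma locallyIntegrable_kern : LocallyIntegrable kern (volume : Measure E3) := by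
  rw [locallyIntegrable_iff]
  intro K hK
  obtain ⟨M, hM⟩ := hK.isBounded.subset_closedBall 0
  refine IntegrableOn.mono_set ?_ hM
  refine ⟨measurable_kern.aestronglyMeasurable, ?_⟩
  rw [hasFiniteIntegral_iff_norm]
  have : ∀ x : E3, ENNReal.ofReal ‖kern x‖
      = ENNReal.ofReal ((4 * Real.pi)⁻¹) * ENNReal.ofReal ((‖x‖ ^ 2)⁻¹) := by
    intro x
    rw [norm_kern, ENNReal.ofReal_mul (by positivity)]
  simp only [this]
  rw [lintegral_const_mul' _ _ ENNReal.ofReal_ne_top]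
  exact ENNReal.mul_lt_top ENNReal.ofReal_lt_top (finite_lint M)

set_option maxHeartbeats 1000000 in
/-- The Biot–Savart field of a smooth compactly supported vorticity is continuous,
decays like ‖x‖⁻² at infinity, and belongs to Lᵖ for every p ∈ (3/2, ∞]. -/
theorem biotSavart_decay_and_Lp
    (ω₀ : E3 → E3) (hω : ContDiff ℝ ∞ ω₀) (hωsupp : HasCompactSupport ω₀)
    (v₀ : E3 → E3)
    (hv₀ : ∀ x : E3, v₀ x =
      -∫ y : E3, (4 * Real.pi * ‖x - y‖ ^ 3)⁻¹ • cross3 (x - y) (ω₀ y)) :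
    Continuous v₀ ∧
    (∃ c > 0, ∃ R > 0, ∀ x : E3, R ≤ ‖x‖ → ‖v₀ x‖ ≤ c / ‖x‖ ^ 2) ∧
    (∀ p : ENNReal, 3 / 2 < p → p ≤ ⊤ → MemLp v₀ p (volume : Measure E3)) := by
  classical
  have hπ : (0:ℝ) < Real.pi := Real.pi_pos
  -- convolution representation
  have hrep : v₀ = fun x => -((kern ⋆[crossL, volume] ω₀) x) := by
    funext x
    rw [hv₀ x, convolution_eq_swap]
    congr 1
    refine integral_congr_ae (Eventually.of_forall fun y => ?_)
    simp only [crossL_apply, kern, cross3_smul_left]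
  have hcont : Continuous v₀ := by
    rw [hrep]
    exact (hωsupp.continuous_convolution_right crossL locallyIntegrable_kern
      hω.continuous).neg
  -- support radius
  obtain ⟨r₀, hr₀⟩ := hωsupp.isBounded.subset_closedBall 0
  set R₀ : ℝ := max r₀ 1 with hR₀def
  have hR₀1 : (1:ℝ) ≤ R₀ := le_max_right _ _
  have hsuppR : tsupport ω₀ ⊆ closedBall 0 R₀ :=
    hr₀.trans (closedBall_subset_closedBall (le_max_left _ _))
  have hωint : Integrable ω₀ := hω.continuous.integrable_of_hasCompactSupport hωsupp
  set Iω : ℝ := ∫ y, ‖ω₀ y‖ with hIdef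
  have hIω : 0 ≤ Iω := integral_nonneg fun y => norm_nonneg _
  set R : ℝ := 2 * R₀ with hRdef
  have hR2 : (2:ℝ) ≤ R := by simp only [hRdef]; linarith
  have hRpos : (0:ℝ) < R := by linarith
  -- decay estimate
  have hdecay : ∀ x : E3, R ≤ ‖x‖ → ‖v₀ x‖ ≤ (Iω / Real.pi) / ‖x‖ ^ 2 := by
    intro x hx
    have hx0 : (0:ℝ) < ‖x‖ := lt_of_lt_of_le (by linarith) hx
    rw [hv₀ x, norm_neg]
    have hb : ∀ y : E3, ‖(4 * Real.pi * ‖x - y‖ ^ 3)⁻¹ • cross3 (x - y) (ω₀ y)‖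
        ≤ (Real.pi * ‖x‖ ^ 2)⁻¹ * ‖ω₀ y‖ := by
      intro y
      by_cases hy : ω₀ y = 0
      · have hz : cross3 (x - y) (0 : E3) = 0 := by
          ext i; fin_cases i <;> simp [cross3]
        rw [hy, hz, smul_zero, norm_zero]
        positivity
      · have hy' : y ∈ tsupport ω₀ := subset_tsupport _ hy
        have hyR : ‖y‖ ≤ R₀ := mem_closedBall_zero_iff.1 (hsuppR hy')
        have hxy : ‖x‖ / 2 ≤ ‖x - y‖ := by
          have h1 := norm_sub_norm_le x y
          have h2 : R ≤ ‖x‖ := hx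
          rw [hRdef] at h2
          linarith
        have hxy0 : (0:ℝ) < ‖x - y‖ := by linarith
        rw [norm_smul, Real.norm_eq_abs, abs_of_nonneg (by positivity)]
        calc (4 * Real.pi * ‖x - y‖ ^ 3)⁻¹ * ‖cross3 (x - y) (ω₀ y)‖
            ≤ (4 * Real.pi * ‖x - y‖ ^ 3)⁻¹ * (‖x - y‖ * ‖ω₀ y‖) :=
              mul_le_mul_of_nonneg_left (norm_cross3_le _ _) (by positivity)
          _ = (4 * Real.pi * ‖x - y‖ ^ 2)⁻¹ * ‖ω₀ y‖ := by
              field_simp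
          _ ≤ (Real.pi * ‖x‖ ^ 2)⁻¹ * ‖ω₀ y‖ := by
              have hsq : (‖x‖/2) ^ 2 ≤ ‖x - y‖ ^ 2 := pow_le_pow_left₀ (by positivity) hxy 2
              have h1 : Real.pi * ‖x‖ ^ 2 ≤ 4 * Real.pi * ‖x - y‖ ^ 2 := by
                nlinarith [mul_le_mul_of_nonneg_left hsq hπ.le]
              have h2 : (0:ℝ) < Real.pi * ‖x‖ ^ 2 := by positivity
              exact mul_le_mul_of_nonneg_right (inv_anti₀ h2 h1) (norm_nonneg _)
    calc ‖∫ y : E3, (4 * Real.pi * ‖x - y‖ ^ 3)⁻¹ • cross3 (x - y) (ω₀ y)‖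
        ≤ ∫ y : E3, (Real.pi * ‖x‖ ^ 2)⁻¹ * ‖ω₀ y‖ :=
          norm_integral_le_of_norm_le (hωint.norm.const_mul _) (Eventually.of_forall hb)
      _ = (Real.pi * ‖x‖ ^ 2)⁻¹ * Iω := by rw [integral_const_mul]
      _ = (Iω / Real.pi) / ‖x‖ ^ 2 := by field_simp
  set c1 : ℝ := Iω / Real.pi + 1 with hc1def
  have hc1pos : (0:ℝ) < c1 := by positivity
  have hdecay' : ∀ x : E3, R ≤ ‖x‖ → ‖v₀ x‖ ≤ c1 / ‖x‖ ^ 2 := by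
    intro x hx
    refine (hdecay x hx).trans ?_
    have hx0 : (0:ℝ) < ‖x‖ := lt_of_lt_of_le (by linarith) hx
    have h2 : (0:ℝ) < ‖x‖ ^ 2 := by positivity
    exact div_le_div_of_nonneg_right (by linarith) h2.le
  -- global japanese-bracket bound
  obtain ⟨M, hM⟩ :=
    (isCompact_closedBall (0:E3) R).exists_bound_of_continuousOn hcont.continuousOn
  set M' : ℝ := max M 0 with hM'def
  have hM'0 : (0:ℝ) ≤ M' := le_max_right _ _
  set C₁ : ℝ := M' * (1 + R) ^ 2 + 4 * c1 with hC₁def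
  have hC₁pos : (0:ℝ) < C₁ := by positivity
  have hjb : ∀ x : E3, (1 + ‖x‖) ^ (-(2:ℝ)) = (((1:ℝ) + ‖x‖) ^ (2:ℕ))⁻¹ := by
    intro x
    rw [show (-(2:ℝ)) = -((2:ℕ):ℝ) by norm_num,
      Real.rpow_neg (by positivity), Real.rpow_natCast]
  have hglobal : ∀ x : E3, ‖v₀ x‖ ≤ C₁ * (1 + ‖x‖) ^ (-(2:ℝ)) := by
    intro x
    rw [hjb, ← div_eq_mul_inv]
    have hux : (0:ℝ) ≤ ‖x‖ := norm_nonneg _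
    have hu2 : (0:ℝ) < (1 + ‖x‖) ^ (2:ℕ) := by positivity
    rcases le_total ‖x‖ R with h | h
    · have h1 : ‖v₀ x‖ ≤ M' :=
        le_trans (hM x (mem_closedBall_zero_iff.2 h)) (le_max_left _ _)
      refine h1.trans ?_
      rw [le_div_iff₀ hu2]
      have hsq : (1 + ‖x‖) ^ (2:ℕ) ≤ (1 + R) ^ (2:ℕ) := by nlinarith
      nlinarith [mul_le_mul_of_nonneg_left hsq hM'0]
    · refine (hdecay' x h).trans ?_
      have hx1 : (1:ℝ) ≤ ‖x‖ := by linarith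
      rw [div_le_div_iff₀ (by positivity) hu2]
      have h4 : (1 + ‖x‖) ^ 2 ≤ 4 * ‖x‖ ^ 2 := by nlinarith
      nlinarith [mul_le_mul_of_nonneg_left h4 hc1pos.le,
        mul_nonneg (mul_nonneg hM'0 (sq_nonneg (1 + R))) (sq_nonneg ‖x‖)]
  refine ⟨hcont, ⟨c1, hc1pos, R, hRpos, hdecay'⟩, ?_⟩
  -- Lᵖ membership
  intro p hp hptop
  have hp0 : p ≠ 0 := by
    intro h; rw [h] at hp; exact absurd hp (by simp)
  by_cases hpt : p = ⊤
  · rw [hpt]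
    refine memLp_top_of_bound hcont.aestronglyMeasurable C₁
      (Eventually.of_forall fun x => ?_)
    refine (hglobal x).trans ?_
    have hle1 : (1 + ‖x‖) ^ (-(2:ℝ)) ≤ 1 :=
      Real.rpow_le_one_of_one_le_of_nonpos (by linarith [norm_nonneg x]) (by norm_num)
    calc C₁ * (1 + ‖x‖) ^ (-(2:ℝ)) ≤ C₁ * 1 := by gcongr
      _ = C₁ := mul_one _
  · have hq : (3/2 : ℝ) < p.toReal := by
      have h32 : ((3/2 : ℝ≥0∞)).toReal = 3/2 := by
        rw [ENNReal.toReal_div]; norm_num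
      rw [← h32]
      exact ENNReal.toReal_strict_mono hpt hp
    have hq0 : (0:ℝ) < p.toReal := by linarith
    have hfin : (finrank ℝ E3 : ℝ) < 2 * p.toReal := by
      rw [show (finrank ℝ E3) = 3 from by simp [finrank_euclideanSpace]]
      push_cast; linarith
    have hint : Integrable (fun x : E3 => ‖v₀ x‖ ^ p.toReal) := by
      refine Integrable.mono'
        ((integrable_one_add_norm hfin).const_mul (C₁ ^ p.toReal)) ?_ ?_
      · exact (hcont.norm.rpow_const (fun x => Or.inr hq0.le)).aestronglyMeasurable
      · refine Eventually.of_forall fun x => ?_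
        rw [Real.norm_eq_abs, abs_of_nonneg (Real.rpow_nonneg (norm_nonneg _) _)]
        calc ‖v₀ x‖ ^ p.toReal ≤ (C₁ * (1 + ‖x‖) ^ (-(2:ℝ))) ^ p.toReal :=
            Real.rpow_le_rpow (norm_nonneg _) (hglobal x) hq0.le
          _ = C₁ ^ p.toReal * (1 + ‖x‖) ^ (-(2 * p.toReal)) := by
            rw [Real.mul_rpow hC₁pos.le (Real.rpow_nonneg (by positivity) _),
              ← Real.rpow_mul (by positivity), neg_mul]
    have hiff := memLp_norm_rpow_iff (p := p) (q := p) (μ := (volume : Measure E3))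
      hcont.aestronglyMeasurable hp0 hpt
    rw [ENNReal.div_self hp0 hpt] at hiff
    exact hiff.1 (memLp_one_iff_integrable.mpr hint)
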